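/- Let V ⊆ ℝ^m be open and let φ : V → ℝ be C¹ with modulus of continuity of the gradient satisfying |∇φ(t₁) − ∇φ(t₂)| ≤ c ω(|t₁−t₂|) on a closed cube I ⊆ V with edges parallel to the axes. Let λ > 0, let δ_λ > 0 satisfy 2cλ · (m^{1/2}·2δ_λ)·ω(m^{1/2}·2δ_λ) = 1, and suppose 2δ_λ is less than the edge length of I. Let F : ℝ^m → ℂ be any function coinciding with e^{iλφ} on V. Then for every u ∈ λ·∇φ(I) there is a cube J ⊆ I with edges of length 2δ_λ parallel to the axes such that |(Δ_J F)^∧(u)| ≥ c_m δ_λ^m, where Δ_J is the product of triangle functions supported on J and c_m > 0 depends only on m. -/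

import Mathlib

open MeasureTheory Real

noncomputable section

/-- The Fourier transform on `ℝ^m` (Euclidean space) with normalization
`f̂(u) = (2π)^{-m} ∫ f(t) e^{-i(u,t)} dt`. -/
def ftE (m : ℕ) (f : EuclideanSpace ℝ (Fin m) → ℂ) (u : EuclideanSpace ℝ (Fin m)) : ℂ :=
  ((((2 * π) ^ m : ℝ) : ℂ))⁻¹ *
    ∫ t : EuclideanSpace ℝ (Fin m),
      f t * Complex.exp (-Complex.I * ((inner ℝ u t : ℝ) : ℂ))

/-- The product of triangle functions supported on the cube with lower corner `b`
and edge length `2δ`: `Δ_J(t) = Π_j max(1 − |t_j − (b_j + δ)|/δ, 0)`. -/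
def triCube (m : ℕ) (b : EuclideanSpace ℝ (Fin m)) (δ : ℝ)
    (t : EuclideanSpace ℝ (Fin m)) : ℝ :=
  ∏ j, max (1 - |t j - (b j + δ)| / δ) 0


lemma coordNormBound {m : ℕ} (x y : EuclideanSpace ℝ (Fin m)) (r : ℝ) (hr : 0 ≤ r)
    (h : ∀ i, |x i - y i| ≤ r) : ‖x - y‖ ≤ Real.sqrt m * r := by
  rw [← dist_eq_norm, EuclideanSpace.dist_eq]
  have hsum : ∑ i, dist (x i) (y i) ^ 2 ≤ (m : ℝ) * r ^ 2 := by
    have := Finset.sum_le_card_nsmul Finset.univ (fun i => dist (x i) (y i) ^ 2) (r ^ 2) ?_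
    · simpa [nsmul_eq_mul] using this
    · intro i _
      show dist (x i) (y i) ^ 2 ≤ r ^ 2
      have h2 : dist (x i) (y i) ≤ r := by
        rw [Real.dist_eq]
        exact h i
      nlinarith [@dist_nonneg _ _ (x i) (y i)]
  calc Real.sqrt (∑ i, dist (x i) (y i) ^ 2) ≤ Real.sqrt ((m : ℝ) * r ^ 2) :=
        Real.sqrt_le_sqrt hsum
    _ = Real.sqrt m * r := by
        rw [Real.sqrt_mul (Nat.cast_nonneg m), Real.sqrt_sq hr]

set_option maxHeartbeats 1600000 in
/-- Key lemma: let `V ⊆ ℝ^m` be open, `φ : V → ℝ` of class `C¹` whose gradient has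
modulus of continuity `≤ c·ω` on a closed coordinate cube `I ⊆ V` of edge `L`; let
`λ > 0` and `δ_λ > 0` satisfy `2cλ·(√m·2δ_λ)·ω(√m·2δ_λ) = 1` and `2δ_λ < L`. If
`F : ℝ^m → ℂ` coincides with `e^{iλφ}` on `V`, then for every `u ∈ λ·∇φ(I)` there
is a coordinate cube `J ⊆ I` of edge `2δ_λ` with `|(Δ_J F)^∧(u)| ≥ c_m δ_λ^m`,
where `c_m > 0` depends only on `m`. -/
theorem stmt11 (m : ℕ) (hm : 1 ≤ m) :
    ∃ cm : ℝ, 0 < cm ∧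
      ∀ (V : Set (EuclideanSpace ℝ (Fin m)))
        (φ : EuclideanSpace ℝ (Fin m) → ℝ)
        (gφ : EuclideanSpace ℝ (Fin m) → EuclideanSpace ℝ (Fin m))
        (ω : ℝ → ℝ) (c lam δ L : ℝ) (a : EuclideanSpace ℝ (Fin m))
        (F : EuclideanSpace ℝ (Fin m) → ℂ),
        IsOpen V →
        (∀ t ∈ V, HasGradientAt φ (gφ t) t) →
        Monotone ω → Continuous ω → ω 0 = 0 →
        0 < c → 0 < lam → 0 < δ → 0 < L →
        {t : EuclideanSpace ℝ (Fin m) | ∀ i, t i ∈ Set.Icc (a i) (a i + L)} ⊆ V →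
        (∀ t₁ ∈ {t : EuclideanSpace ℝ (Fin m) | ∀ i, t i ∈ Set.Icc (a i) (a i + L)},
         ∀ t₂ ∈ {t : EuclideanSpace ℝ (Fin m) | ∀ i, t i ∈ Set.Icc (a i) (a i + L)},
          ‖gφ t₁ - gφ t₂‖ ≤ c * ω ‖t₁ - t₂‖) →
        2 * c * lam * (Real.sqrt m * (2 * δ)) * ω (Real.sqrt m * (2 * δ)) = 1 →
        2 * δ < L →
        (∀ t ∈ V, F t = Complex.exp (Complex.I * lam * φ t)) →
        ∀ u : EuclideanSpace ℝ (Fin m),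
          (∃ t₀, (∀ i, t₀ i ∈ Set.Icc (a i) (a i + L)) ∧ u = lam • gφ t₀) →
          ∃ b : EuclideanSpace ℝ (Fin m),
            (∀ i, a i ≤ b i ∧ b i + 2 * δ ≤ a i + L) ∧
            cm * δ ^ m ≤ ‖ftE m (fun t => (triCube m b δ t : ℂ) * F t) u‖ := by
  have hcos : (0:ℝ) < Real.cos 2⁻¹ := by
    apply Real.cos_pos_of_mem_Ioo
    constructor
    · nlinarith [Real.pi_gt_three]
    · nlinarith [Real.pi_gt_three]
  refine ⟨((2 * π) ^ m)⁻¹ * ((2:ℝ)⁻¹ ^ m * Real.cos 2⁻¹), by positivity, ?_⟩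
  intro V φ gφ ω c lam δ L a F hV hgrad hωmono hωcont hω0 hc hlam hδ hL hIV hmod heq hδL hF
  rintro u ⟨t₀, ht₀, hu⟩
  set s : ℝ := Real.sqrt m * (2 * δ) with hs_def
  have hm0 : (0:ℝ) < (m:ℝ) := by exact_mod_cast Nat.pos_of_ne_zero (by omega)
  have hspos : 0 < s := by
    have : (0:ℝ) < Real.sqrt m := Real.sqrt_pos.2 hm0
    positivity
  have hωs : 0 ≤ ω s := hω0 ▸ hωmono hspos.le
  set C : ℝ := lam * (c * ω s) with hC_def
  have hC0 : 0 ≤ C := by positivity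
  have hCs : C * s = 1 / 2 := by
    have := heq
    rw [hC_def]
    nlinarith [this]
  -- the cube
  set b : EuclideanSpace ℝ (Fin m) := WithLp.toLp 2 (fun i => min (max (a i) (t₀ i - δ)) (a i + L - 2 * δ)) with hb_def
  have hb : ∀ i, a i ≤ b i ∧ b i + 2 * δ ≤ a i + L ∧ b i ≤ t₀ i ∧ t₀ i ≤ b i + 2 * δ := by
    intro i
    have h1 : a i ≤ t₀ i := (ht₀ i).1
    have h2 : t₀ i ≤ a i + L := (ht₀ i).2
    have hbv : b i = min (max (a i) (t₀ i - δ)) (a i + L - 2 * δ) := rfl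
    constructor
    · rw [hbv]; exact le_min (le_max_left _ _) (by linarith)
    constructor
    · have := min_le_right (max (a i) (t₀ i - δ)) (a i + L - 2 * δ)
      rw [hbv]; linarith
    constructor
    · rw [hbv]; exact min_le_of_left_le (max_le h1 (by linarith))
    · have : t₀ i - 2 * δ ≤ b i := by
        rw [hbv]
        exact le_min (le_max_of_le_right (by linarith)) (by linarith)
      linarith
  set K : Set (EuclideanSpace ℝ (Fin m)) := {t : EuclideanSpace ℝ (Fin m) | ∀ i, t i ∈ Set.Icc (b i) (b i + 2 * δ)} with hK_def
  have hKI : K ⊆ {t : EuclideanSpace ℝ (Fin m) | ∀ i, t i ∈ Set.Icc (a i) (a i + L)} := by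
    intro t ht i
    exact ⟨le_trans (hb i).1 (ht i).1, le_trans (ht i).2 (hb i).2.1⟩
  have hKV : K ⊆ V := fun t ht => hIV (hKI ht)
  have ht₀K : t₀ ∈ K := fun i => ⟨(hb i).2.2.1, (hb i).2.2.2⟩
  -- convexity and compactness of K
  have hKconv : Convex ℝ K := by
    intro x hx y hy α β hα hβ hαβ
    intro i
    have hxi := hx i
    have hyi := hy i
    have happ : (α • x + β • y) i = α * x i + β * y i := by
      simp [PiLp.add_apply, PiLp.smul_apply, smul_eq_mul]
    rw [happ]
    exact convex_Icc _ _ hxi hyi hα hβ hαβ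
  have hKrepr : K = ⇑(PiLp.continuousLinearEquiv 2 ℝ (fun _ : Fin m => ℝ)).toHomeomorph ⁻¹'
      (Set.univ.pi fun i => Set.Icc (b i) (b i + 2 * δ)) := by
    ext t
    simp only [Set.mem_preimage, Set.mem_pi, Set.mem_univ, forall_true_left]
    rfl
  have hKcomp : IsCompact K := by
    rw [hKrepr]
    exact (Homeomorph.isCompact_preimage _).2 (isCompact_univ_pi fun i => isCompact_Icc)
  have hKmeas : MeasurableSet K := hKcomp.isClosed.measurableSet
  -- the phase
  set ψ : EuclideanSpace ℝ (Fin m) → ℝ := fun t => lam * φ t - (inner ℝ u t : ℝ) with hψ_def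
  have hψderiv : ∀ t ∈ V, HasFDerivAt ψ
      ((InnerProductSpace.toDual ℝ (EuclideanSpace ℝ (Fin m))) (lam • gφ t - u)) t := by
    intro t ht
    have h1 : HasFDerivAt φ ((InnerProductSpace.toDual ℝ (EuclideanSpace ℝ (Fin m))) (gφ t)) t :=
      (hgrad t ht).hasFDerivAt
    have h2 := h1.const_mul lam
    have h3 : HasFDerivAt (fun y : EuclideanSpace ℝ (Fin m) => (inner ℝ u y : ℝ)) (innerSL ℝ u) t := by
      simpa using (innerSL ℝ u).hasFDerivAt (x := t)
    have h4 := h2.sub h3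
    have hDeq : (InnerProductSpace.toDual ℝ (EuclideanSpace ℝ (Fin m))) (lam • gφ t - u)
        = lam • (InnerProductSpace.toDual ℝ (EuclideanSpace ℝ (Fin m))) (gφ t) - innerSL ℝ u := by
      ext y
      simp [InnerProductSpace.toDual_apply_apply, inner_sub_left, real_inner_smul_left]
    rw [hDeq]
    exact h4
  have hDnorm : ∀ t ∈ K, ‖(InnerProductSpace.toDual ℝ (EuclideanSpace ℝ (Fin m))) (lam • gφ t - u)‖ ≤ C := by
    intro t ht
    rw [LinearIsometryEquiv.norm_map]
    have h1 : lam • gφ t - u = lam • (gφ t - gφ t₀) := by rw [hu, smul_sub]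
    rw [h1, norm_smul, Real.norm_eq_abs, abs_of_pos hlam]
    have h2 : ‖gφ t - gφ t₀‖ ≤ c * ω ‖t - t₀‖ := hmod t (hKI ht) t₀ ht₀
    have h3 : ‖t - t₀‖ ≤ s := by
      rw [hs_def]
      apply coordNormBound _ _ _ (by positivity)
      intro i
      have h5 := ht i
      have h6 := ht₀K i
      rw [abs_le]
      constructor <;>
        · have := h5.1; have := h5.2; have := h6.1; have := h6.2; linarith
    have h4 : ω ‖t - t₀‖ ≤ ω s := hωmono h3
    calc lam * ‖gφ t - gφ t₀‖ ≤ lam * (c * ω ‖t - t₀‖) := by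
          apply mul_le_mul_of_nonneg_left h2 hlam.le
      _ ≤ lam * (c * ω s) := by
          apply mul_le_mul_of_nonneg_left _ hlam.le
          exact mul_le_mul_of_nonneg_left h4 hc.le
      _ = C := rfl
  have hψbound : ∀ t ∈ K, |ψ t - ψ t₀| ≤ 1 / 2 := by
    intro t ht
    have h1 : ‖ψ t - ψ t₀‖ ≤ C * ‖t - t₀‖ := by
      apply Convex.norm_image_sub_le_of_norm_hasFDerivWithin_le
        (f' := fun t => (InnerProductSpace.toDual ℝ (EuclideanSpace ℝ (Fin m))) (lam • gφ t - u))
        (fun x hx => (hψderiv x (hKV hx)).hasFDerivWithinAt) hDnorm hKconv ht₀K ht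
    have h3 : ‖t - t₀‖ ≤ s := by
      rw [hs_def]
      apply coordNormBound _ _ _ (by positivity)
      intro i
      have h5 := ht i
      have h6 := ht₀K i
      rw [abs_le]
      constructor <;>
        · have := h5.1; have := h5.2; have := h6.1; have := h6.2; linarith
    have h2 : C * ‖t - t₀‖ ≤ C * s := mul_le_mul_of_nonneg_left h3 hC0
    rw [Real.norm_eq_abs] at h1
    calc |ψ t - ψ t₀| ≤ C * ‖t - t₀‖ := h1
      _ ≤ C * s := h2
      _ = 1 / 2 := hCs
  -- triangle function facts
  set Δ : EuclideanSpace ℝ (Fin m) → ℝ := triCube m b δ with hΔ_def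
  have hΔnonneg : ∀ t, 0 ≤ Δ t := by
    intro t
    exact Finset.prod_nonneg fun j _ => le_max_right _ _
  have hΔzero : ∀ t, t ∉ K → Δ t = 0 := by
    intro t ht
    rw [hK_def] at ht
    simp only [Set.mem_setOf_eq, not_forall] at ht
    obtain ⟨i, hi⟩ := ht
    rw [Set.mem_Icc, not_and_or, not_le, not_le] at hi
    apply Finset.prod_eq_zero (Finset.mem_univ i)
    have habs : δ < |t i - (b i + δ)| := by
      rcases hi with h | h
      · rw [abs_sub_comm, abs_of_pos (by linarith)]; linarith
      · rw [abs_of_pos (by linarith)]; linarith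
    have : 1 - |t i - (b i + δ)| / δ < 0 := by
      rw [sub_neg, lt_div_iff₀ hδ]; linarith
    exact max_eq_right this.le
  set S : Set (EuclideanSpace ℝ (Fin m)) := {t : EuclideanSpace ℝ (Fin m) | ∀ i, t i ∈ Set.Icc (b i + δ/2) (b i + 3*δ/2)} with hS_def
  have hSK : S ⊆ K := by
    intro t ht i
    have := ht i
    exact ⟨by linarith [this.1], by linarith [this.2]⟩
  have hΔS : ∀ t ∈ S, (2:ℝ)⁻¹ ^ m ≤ Δ t := by
    intro t ht
    have h1 : ∀ j : Fin m, (2:ℝ)⁻¹ ≤ max (1 - |t j - (b j + δ)| / δ) 0 := by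
      intro j
      have h2 := ht j
      have habs : |t j - (b j + δ)| ≤ δ / 2 := by
        rw [abs_le]; exact ⟨by linarith [h2.1], by linarith [h2.2]⟩
      have : 1 - |t j - (b j + δ)| / δ ≥ 2⁻¹ := by
        have : |t j - (b j + δ)| / δ ≤ 1/2 := by
          rw [div_le_iff₀ hδ]; linarith
        linarith
      exact le_max_of_le_left this
    calc (2:ℝ)⁻¹ ^ m = ∏ _j : Fin m, (2:ℝ)⁻¹ := by
          rw [Finset.prod_const, Finset.card_univ, Fintype.card_fin]
      _ ≤ Δ t := Finset.prod_le_prod (fun j _ => by positivity) (fun j _ => h1 j)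
  -- measurability / volume of S
  have hSrepr : S = ⇑(MeasurableEquiv.toLp 2 (Fin m → ℝ)).symm ⁻¹'
      (Set.univ.pi fun i => Set.Icc (b i + δ/2) (b i + 3*δ/2)) := by
    ext t
    simp only [Set.mem_preimage, Set.mem_pi, Set.mem_univ, forall_true_left]
    rfl
  have hSmeas : MeasurableSet S := by
    rw [hSrepr]
    exact (MeasurableEquiv.toLp 2 (Fin m → ℝ)).symm.measurable
      (MeasurableSet.univ_pi fun i => measurableSet_Icc)
  have hSvol : volume S = ENNReal.ofReal δ ^ m := by
    rw [hSrepr,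
      (EuclideanSpace.volume_preserving_symm_measurableEquiv_toLp (Fin m)).measure_preimage
        (MeasurableSet.univ_pi fun i => measurableSet_Icc).nullMeasurableSet,
      volume_pi_pi]
    have : ∀ i : Fin m, volume (Set.Icc (b i + δ/2) (b i + 3*δ/2)) = ENNReal.ofReal δ := by
      intro i
      rw [Real.volume_Icc]
      congr 1
      ring
    simp_rw [this]
    rw [Finset.prod_const, Finset.card_univ, Fintype.card_fin]
  have hSvolReal : (volume S).toReal = δ ^ m := by
    rw [hSvol, ENNReal.toReal_pow, ENNReal.toReal_ofReal hδ.le]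
  -- the functions
  set h : EuclideanSpace ℝ (Fin m) → ℂ := fun t => (Δ t : ℂ) * Complex.exp ((ψ t : ℝ) * Complex.I) with hh_def
  have hfeq : (fun t : EuclideanSpace ℝ (Fin m) => ((Δ t : ℂ) * F t) * Complex.exp (-Complex.I * ((inner ℝ u t : ℝ) : ℂ)))
      = K.indicator h := by
    funext t
    by_cases htK : t ∈ K
    · rw [Set.indicator_of_mem htK, hh_def]
      rw [hF t (hKV htK)]
      rw [mul_assoc, ← Complex.exp_add]
      congr 1
      rw [hψ_def]
      push_cast
      ring
    · rw [Set.indicator_of_notMem htK, hΔzero t htK]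
      simp
  -- continuity
  have hφcont : ContinuousOn φ K := fun t ht =>
    ((hgrad t (hKV ht)).hasFDerivAt.continuousAt).continuousWithinAt
  have hΔcont : Continuous Δ := by
    rw [hΔ_def]
    unfold triCube
    apply continuous_finset_prod
    intro j _
    exact (continuous_const.sub
      ((((EuclideanSpace.proj (𝕜 := ℝ) j).continuous.sub continuous_const).abs).div_const δ)).max
      continuous_const
  have hinnercont : Continuous (fun t : EuclideanSpace ℝ (Fin m) => (inner ℝ u t : ℝ)) := (innerSL ℝ u).continuous
  have hψcont : ContinuousOn ψ K := by
    rw [hψ_def]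
    exact (continuousOn_const.mul hφcont).sub hinnercont.continuousOn
  have hhcont : ContinuousOn h K := by
    rw [hh_def]
    apply ContinuousOn.mul
    · exact (Complex.continuous_ofReal.comp hΔcont).continuousOn
    · exact Complex.continuous_exp.comp_continuousOn
        ((Complex.continuous_ofReal.comp_continuousOn hψcont).mul continuousOn_const)
  have hInt : Integrable (K.indicator h) := by
    rw [integrable_indicator_iff hKmeas]
    exact hhcont.integrableOn_compact hKcomp
  -- the real comparison function
  set g : EuclideanSpace ℝ (Fin m) → ℝ := K.indicator (fun t => Δ t * Real.cos (ψ t - ψ t₀)) with hg_def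
  have hgInt : Integrable g := by
    rw [hg_def, integrable_indicator_iff hKmeas]
    apply ContinuousOn.integrableOn_compact hKcomp
    exact (hΔcont.continuousOn).mul
      (Real.continuous_cos.comp_continuousOn (hψcont.sub continuousOn_const))
  have hre : ∀ t, (Complex.exp ((-(ψ t₀) : ℝ) * Complex.I) * K.indicator h t).re = g t := by
    intro t
    by_cases htK : t ∈ K
    · rw [Set.indicator_of_mem htK, hg_def, Set.indicator_of_mem htK, hh_def]
      have : Complex.exp ((-(ψ t₀) : ℝ) * Complex.I) *
          ((Δ t : ℂ) * Complex.exp ((ψ t : ℝ) * Complex.I))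
          = (Δ t : ℂ) * Complex.exp (((ψ t - ψ t₀ : ℝ)) * Complex.I) := by
        rw [mul_comm (Complex.exp _), mul_assoc, ← Complex.exp_add]
        congr 2
        push_cast
        ring
      rw [this, Complex.re_ofReal_mul, Complex.exp_ofReal_mul_I_re]
    · rw [Set.indicator_of_notMem htK, hg_def, Set.indicator_of_notMem htK]
      simp
  -- lower bound for ∫ g
  have hpt : ∀ t, S.indicator (fun _ => (2:ℝ)⁻¹ ^ m * Real.cos 2⁻¹) t ≤ g t := by
    intro t
    by_cases htS : t ∈ S
    · rw [Set.indicator_of_mem htS, hg_def, Set.indicator_of_mem (hSK htS)]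
      have h1 : |ψ t - ψ t₀| ≤ 1/2 := hψbound t (hSK htS)
      have h2 : Real.cos 2⁻¹ ≤ Real.cos (ψ t - ψ t₀) := by
        rw [← Real.cos_abs (ψ t - ψ t₀)]
        apply Real.cos_le_cos_of_nonneg_of_le_pi (abs_nonneg _)
        · nlinarith [Real.pi_gt_three]
        · linarith
      exact mul_le_mul (hΔS t htS) h2 hcos.le (hΔnonneg t)
    · rw [Set.indicator_of_notMem htS]
      by_cases htK : t ∈ K
      · rw [hg_def, Set.indicator_of_mem htK]
        have h1 : |ψ t - ψ t₀| ≤ 1/2 := hψbound t htK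
        have h2 : 0 ≤ Real.cos (ψ t - ψ t₀) := by
          have := Real.cos_le_cos_of_nonneg_of_le_pi (abs_nonneg (ψ t - ψ t₀))
            (y := 1/2) (by nlinarith [Real.pi_gt_three]) h1
          rw [Real.cos_abs] at this
          have h3 : (0:ℝ) < Real.cos (1/2) := by
            rw [show (1:ℝ)/2 = 2⁻¹ by norm_num]; exact hcos
          linarith
        exact mul_nonneg (hΔnonneg t) h2
      · rw [hg_def, Set.indicator_of_notMem htK]
  have hSIndInt : Integrable (S.indicator (fun _ : EuclideanSpace ℝ (Fin m) => (2:ℝ)⁻¹ ^ m * Real.cos 2⁻¹)) := by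
    rw [integrable_indicator_iff hSmeas]
    apply (integrableOn_const_iff (C := (2:ℝ)⁻¹ ^ m * Real.cos 2⁻¹)).2
    right
    rw [hSvol]
    exact ENNReal.pow_lt_top ENNReal.ofReal_lt_top
  have hgLB : (2:ℝ)⁻¹ ^ m * Real.cos 2⁻¹ * δ ^ m ≤ ∫ t, g t := by
    have h1 : ∫ t, S.indicator (fun _ : EuclideanSpace ℝ (Fin m) => (2:ℝ)⁻¹ ^ m * Real.cos 2⁻¹) t
        = δ ^ m * ((2:ℝ)⁻¹ ^ m * Real.cos 2⁻¹) := by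
      rw [integral_indicator_const _ hSmeas, measureReal_def, hSvolReal, smul_eq_mul]
    calc (2:ℝ)⁻¹ ^ m * Real.cos 2⁻¹ * δ ^ m
        = ∫ t, S.indicator (fun _ : EuclideanSpace ℝ (Fin m) => (2:ℝ)⁻¹ ^ m * Real.cos 2⁻¹) t := by rw [h1]; ring
      _ ≤ ∫ t, g t := integral_mono hSIndInt hgInt hpt
  -- relate to the complex integral
  set Z : ℂ := ∫ t, K.indicator h t with hZ_def
  have hreZ : ∫ t, g t = (Complex.exp ((-(ψ t₀) : ℝ) * Complex.I) * Z).re := by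
    have e1 : ∀ w : ℂ, w.re = RCLike.re w := fun w => rfl
    rw [hZ_def, e1, ← integral_const_mul, ← integral_re (hInt.const_mul _)]
    refine integral_congr_ae (Filter.Eventually.of_forall fun t => ?_)
    exact (hre t).symm
  have hZnorm : (2:ℝ)⁻¹ ^ m * Real.cos 2⁻¹ * δ ^ m ≤ ‖Z‖ := by
    have h1 : (Complex.exp ((-(ψ t₀) : ℝ) * Complex.I) * Z).re
        ≤ ‖Complex.exp ((-(ψ t₀) : ℝ) * Complex.I) * Z‖ := by
      exact Complex.re_le_norm _
    have h2 : ‖Complex.exp ((-(ψ t₀) : ℝ) * Complex.I) * Z‖ = ‖Z‖ := by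
      rw [norm_mul, Complex.norm_exp_ofReal_mul_I, one_mul]
    calc (2:ℝ)⁻¹ ^ m * Real.cos 2⁻¹ * δ ^ m ≤ ∫ t, g t := hgLB
      _ = (Complex.exp ((-(ψ t₀) : ℝ) * Complex.I) * Z).re := hreZ
      _ ≤ ‖Z‖ := h2 ▸ h1
  -- conclude
  refine ⟨b, fun i => ⟨(hb i).1, (hb i).2.1⟩, ?_⟩
  have hftE : ftE m (fun t => (triCube m b δ t : ℂ) * F t) u
      = ((((2 * π) ^ m : ℝ) : ℂ))⁻¹ * Z := by
    rw [ftE, hZ_def]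
    congr 1
    rw [← hfeq]
  rw [hftE, norm_mul]
  have h2π : (0:ℝ) < (2 * π) ^ m := by positivity
  have hnorminv : ‖((((2 * π) ^ m : ℝ) : ℂ))⁻¹‖ = ((2 * π) ^ m)⁻¹ := by
    rw [norm_inv, Complex.norm_real, Real.norm_eq_abs, abs_of_pos h2π]
  rw [hnorminv]
  calc ((2 * π) ^ m)⁻¹ * ((2:ℝ)⁻¹ ^ m * Real.cos 2⁻¹) * δ ^ m
      = ((2 * π) ^ m)⁻¹ * ((2:ℝ)⁻¹ ^ m * Real.cos 2⁻¹ * δ ^ m) := by ring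
    _ ≤ ((2 * π) ^ m)⁻¹ * ‖Z‖ := by
        apply mul_le_mul_of_nonneg_left hZnorm (by positivity)
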